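/- In the setting of a potential population game with symmetric W having strictly positive diagonal entries, irreducible W, x ∈ X with y = x·1, and f satisfying Assumption 1, the Lyapunov derivative (1/2)∑_{i,j} Λ_{ij}(x)(f_{ji}(y) − f_{ij}(y))(r_i(y) − r_j(y)) equals zero if and only if r_i(y) = r_j(y) for all i, j with y_i > 0 and y_j > 0 (i.e., y is a restricted Nash equilibrium). -/

import Mathlib

private lemma sign_aux {u v : ℝ} (h : Real.sign u = Real.sign v) :
    0 ≤ u * v ∧ (v ≠ 0 → 0 < u * v) := by
  rcases lt_trichotomy v 0 with hv | hv | hv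
  · rw [Real.sign_of_neg hv] at h
    rcases lt_trichotomy u 0 with hu | hu | hu
    · exact ⟨le_of_lt (mul_pos_of_neg_of_neg hu hv), fun _ => mul_pos_of_neg_of_neg hu hv⟩
    · rw [hu, Real.sign_zero] at h; norm_num at h
    · rw [Real.sign_of_pos hu] at h; norm_num at h
  · subst hv; simp
  · rw [Real.sign_of_pos hv] at h
    rcases lt_trichotomy u 0 with hu | hu | hu
    · rw [Real.sign_of_neg hu] at h; norm_num at h
    · rw [hu, Real.sign_zero] at h; norm_num at h
    · exact ⟨le_of_lt (mul_pos hu hv), fun _ => mul_pos hu hv⟩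

theorem stmt11 {A H : Type*} [Fintype A] [Fintype H] [DecidableEq A]
    (r : A → (A → ℝ) → ℝ)
    (Φ : (A → ℝ) → ℝ) (hΦ : Differentiable ℝ Φ)
    (hpot : ∀ (y : A → ℝ) i j,
      fderiv ℝ Φ y (Pi.single j 1) - fderiv ℝ Φ y (Pi.single i 1) = r j y - r i y)
    (W : H → H → ℝ) (hW : ∀ h k, 0 ≤ W h k) (hWsym : ∀ h k, W h k = W k h)
    (hdiag : ∀ h, 0 < W h h)
    (hirr : ∀ h k, Relation.ReflTransGen (fun a b => 0 < W a b) h k)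
    (f : (A → ℝ) → A → A → ℝ) (hf : ∀ y i j, 0 ≤ f y i j)
    (hsgn : ∀ (y : A → ℝ) i j, Real.sign (f y i j - f y j i) = Real.sign (r j y - r i y))
    (η : H → ℝ) (hη : ∀ h, 0 < η h) (hηsum : ∑ h, η h = 1)
    (x : A → H → ℝ) (hx : ∀ i h, 0 ≤ x i h) (hcol : ∀ h, ∑ i, x i h = η h)
    (y : A → ℝ) (hy : ∀ i, y i = ∑ h, x i h) :
    ((1/2) * ∑ i : A, ∑ j : A,
        (∑ h, ∑ k, x i h * W h k * x j k) * (f y j i - f y i j) * (r i y - r j y) = 0)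
    ↔ (∀ i j, 0 < y i → 0 < y j → r i y = r j y) := by
  set Λ : A → A → ℝ := fun i j => ∑ h, ∑ k, x i h * W h k * x j k with hΛdef
  have hΛnn : ∀ i j, 0 ≤ Λ i j := fun i j =>
    Finset.sum_nonneg fun h _ => Finset.sum_nonneg fun k _ =>
      mul_nonneg (mul_nonneg (hx i h) (hW h k)) (hx j k)
  have hsign : ∀ i j : A,
      Real.sign (f y j i - f y i j) = Real.sign (r i y - r j y) := fun i j => hsgn y j i
  have htnn : ∀ i j : A, 0 ≤ Λ i j * (f y j i - f y i j) * (r i y - r j y) := by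
    intro i j
    rw [mul_assoc]
    exact mul_nonneg (hΛnn i j) (sign_aux (hsign i j)).1
  have hΛle : ∀ (a b : A) (h k : H), x a h * W h k * x b k ≤ Λ a b := by
    intro a b h k
    calc x a h * W h k * x b k
        ≤ ∑ k', x a h * W h k' * x b k' :=
          Finset.single_le_sum (fun k' _ =>
            mul_nonneg (mul_nonneg (hx a h) (hW h k')) (hx b k')) (Finset.mem_univ k)
      _ ≤ Λ a b :=
          Finset.single_le_sum (f := fun h' => ∑ k', x a h' * W h' k' * x b k')
            (fun h' _ => Finset.sum_nonneg fun k' _ =>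
              mul_nonneg (mul_nonneg (hx a h') (hW h' k')) (hx b k')) (Finset.mem_univ h)
  constructor
  · intro hsum i j hyi hyj
    -- each term is zero
    have hS : ∑ i : A, ∑ j : A, Λ i j * (f y j i - f y i j) * (r i y - r j y) = 0 := by
      have := hsum
      field_simp at this
      rw [mul_zero] at this
      exact this
    have hterm : ∀ a b : A, Λ a b * (f y b a - f y a b) * (r a y - r b y) = 0 := by
      intro a b
      have h1 := (Finset.sum_eq_zero_iff_of_nonneg
        (fun i _ => Finset.sum_nonneg fun j _ => htnn i j)).mp hS a (Finset.mem_univ a)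
      exact (Finset.sum_eq_zero_iff_of_nonneg (fun j _ => htnn a j)).mp h1 b (Finset.mem_univ b)
    have key : ∀ a b : A, 0 < Λ a b → r a y = r b y := by
      intro a b hab
      by_contra hne
      have hv : r a y - r b y ≠ 0 := sub_ne_zero.mpr hne
      have hpos := (sign_aux (hsign a b)).2 hv
      have : 0 < Λ a b * (f y b a - f y a b) * (r a y - r b y) := by
        rw [mul_assoc]; exact mul_pos hab hpos
      exact absurd (hterm a b) (ne_of_gt this)
    -- existence of a played action in each column
    have hcolpos : ∀ c : H, ∃ a : A, 0 < x a c := by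
      intro c
      by_contra hc
      push_neg at hc
      have : ∑ i, x i c = 0 :=
        le_antisymm (Finset.sum_nonpos fun i _ => hc i) (Finset.sum_nonneg fun i _ => hx i c)
      rw [hcol c] at this
      exact absurd this (ne_of_gt (hη c))
    -- chain lemma
    have chain : ∀ h k : H, Relation.ReflTransGen (fun a b => 0 < W a b) h k →
        ∀ a b : A, 0 < x a h → 0 < x b k → r a y = r b y := by
      intro h k hrel
      induction hrel with
      | refl =>
        intro a b ha hb
        exact key a b (lt_of_lt_of_le
          (mul_pos (mul_pos ha (hdiag h)) hb) (hΛle a b h h))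
      | tail _ hWck ih =>
        rename_i c k' _
        intro a b ha hb
        obtain ⟨b', hb'⟩ := hcolpos c
        have h1 : r a y = r b' y := ih a b' ha hb'
        have h2 : r b' y = r b y := key b' b (lt_of_lt_of_le
          (mul_pos (mul_pos hb' hWck) hb) (hΛle b' b c k'))
        exact h1.trans h2
    -- find columns where i and j are played
    have hxi : ∃ h, 0 < x i h := by
      by_contra hc
      push_neg at hc
      have : y i = 0 := by
        rw [hy i]
        exact le_antisymm (Finset.sum_nonpos fun h _ => hc h)
          (Finset.sum_nonneg fun h _ => hx i h)
      exact absurd this (ne_of_gt hyi)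
    have hxj : ∃ k, 0 < x j k := by
      by_contra hc
      push_neg at hc
      have : y j = 0 := by
        rw [hy j]
        exact le_antisymm (Finset.sum_nonpos fun k _ => hc k)
          (Finset.sum_nonneg fun k _ => hx j k)
      exact absurd this (ne_of_gt hyj)
    obtain ⟨h, hh⟩ := hxi
    obtain ⟨k, hk⟩ := hxj
    exact chain h k (hirr h k) i j hh hk
  · intro hnash
    have hynn : ∀ i, 0 ≤ y i := fun i => by
      rw [hy i]; exact Finset.sum_nonneg fun h _ => hx i h
    have : ∑ i : A, ∑ j : A, Λ i j * (f y j i - f y i j) * (r i y - r j y) = 0 := by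
      apply Finset.sum_eq_zero
      intro i _
      apply Finset.sum_eq_zero
      intro j _
      by_cases hyi : y i = 0
      · have hzero : ∀ h, x i h = 0 := by
          intro h
          have := (Finset.sum_eq_zero_iff_of_nonneg (fun h _ => hx i h)).mp
            ((hy i).symm.trans hyi) h (Finset.mem_univ h)
          exact this
        have : Λ i j = 0 := by
          apply Finset.sum_eq_zero
          intro h _
          apply Finset.sum_eq_zero
          intro k _
          rw [hzero h]; ring
        rw [this]; ring
      · by_cases hyj : y j = 0
        · have hzero : ∀ k, x j k = 0 := by
            intro k
            exact (Finset.sum_eq_zero_iff_of_nonneg (fun k _ => hx j k)).mp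
              ((hy j).symm.trans hyj) k (Finset.mem_univ k)
          have : Λ i j = 0 := by
            apply Finset.sum_eq_zero
            intro h _
            apply Finset.sum_eq_zero
            intro k _
            rw [hzero k]; ring
          rw [this]; ring
        · have hri : r i y = r j y :=
            hnash i j (lt_of_le_of_ne (hynn i) (Ne.symm hyi))
              (lt_of_le_of_ne (hynn j) (Ne.symm hyj))
          rw [hri]; ring
    rw [this]; ring
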